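/- For a KN tableau T of shape λ = (m1+m2,m2) with statistics (b1,b2,b3,b4), the weight wt(T) = Σ_i (k_i − k_{ī}) ε_i (where k_i, k_{ī} count occurrences of i and ī in T) satisfies wt(T) = (m1+m2−b2−b4) ε1 + (m2−b1+b2−b3+b4) ε2. -/
import Mathlib


/-- A Kashiwara–Nakashima tableau of `spo(4|1)` of two-row shape
`λ = (m1+m2, m2)`. The alphabet `{1, 2, 0, 2̄, 1̄}` with order `1<2<0<2̄<1̄` is
encoded as `Fin 5` (so `0 ↦ 1`, `1 ↦ 2`, `2 ↦ 0`, `3 ↦ 2̄`, `4 ↦ 1̄`).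
Conditions: rows weakly increase and `0` does not repeat in a row; columns
strictly increase except that `0` may repeat; `1` and `1̄` never share a column;
the two forbidden adjacent-column configurations of Definition 3.1(iii):
`2` in row 1 with `2̄` in row 2 of the next column, and `0` in row 1 with `2̄`
in row 2 of the next column. -/
structure KNTableau (m1 m2 : ℕ) where
  row1 : Fin (m1 + m2) → Fin 5
  row2 : Fin m2 → Fin 5
  mono1 : Monotone row1
  mono2 : Monotone row2
  zeroRow1 : ∀ i j : Fin (m1 + m2), i < j → ¬(row1 i = 2 ∧ row1 j = 2)
  zeroRow2 : ∀ i j : Fin m2, i < j → ¬(row2 i = 2 ∧ row2 j = 2)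
  col : ∀ j : Fin m2,
    row1 (Fin.castLE (Nat.le_add_left m2 m1) j) < row2 j ∨
      (row1 (Fin.castLE (Nat.le_add_left m2 m1) j) = 2 ∧ row2 j = 2)
  noOneOneBar : ∀ j : Fin m2,
    ¬(row1 (Fin.castLE (Nat.le_add_left m2 m1) j) = 0 ∧ row2 j = 4)
  forbidTwo : ∀ j : Fin m2, ∀ h : (j : ℕ) + 1 < m2,
    ¬(row1 (Fin.castLE (Nat.le_add_left m2 m1) j) = 1 ∧ row2 ⟨j + 1, h⟩ = 3)
  forbidZero : ∀ j : Fin m2, ∀ h : (j : ℕ) + 1 < m2,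
    ¬(row1 (Fin.castLE (Nat.le_add_left m2 m1) j) = 2 ∧ row2 ⟨j + 1, h⟩ = 3)

namespace KNTableau

variable {m1 m2 : ℕ} (T : KNTableau m1 m2)

/-- `b1 = 2·#{row-2 entries ≥ 2̄} + #{row-2 entries = 0}`. -/
def b1 : ℕ :=
  2 * (Finset.univ.filter fun j => 3 ≤ T.row2 j).card +
    (Finset.univ.filter fun j => T.row2 j = 2).card

/-- `b2 = #{row-1 entries > 1} + #{row-2 entries > 2̄}`. -/
def b2 : ℕ :=
  (Finset.univ.filter fun i => 0 < T.row1 i).card +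
    (Finset.univ.filter fun j => 3 < T.row2 j).card

/-- `b3 = 2·#{row-1 entries ≥ 2̄} + #{row-1 entries = 0}`. -/
def b3 : ℕ :=
  2 * (Finset.univ.filter fun i => 3 ≤ T.row1 i).card +
    (Finset.univ.filter fun i => T.row1 i = 2).card

/-- `b4 = #{row-1 entries > 2̄}`. -/
def b4 : ℕ :=
  (Finset.univ.filter fun i => 3 < T.row1 i).card

end KNTableau

namespace KNTableau

/-- The number of occurrences of the letter `a` in the tableau `T`. -/
def count {m1 m2 : ℕ} (T : KNTableau m1 m2) (a : Fin 5) : ℕ :=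
  (Finset.univ.filter fun i => T.row1 i = a).card +
    (Finset.univ.filter fun j => T.row2 j = a).card

end KNTableau


section Aux

open Finset

private lemma sum_boole_int {n : ℕ} (p : Fin n → Prop) [DecidablePred p] :
    ∑ i, (if p i then (1 : ℤ) else 0) = ((Finset.univ.filter p).card : ℤ) := by
  simp [Finset.sum_boole]

private lemma row1_point1 : ∀ x : Fin 5,
    (if x = 0 then (1 : ℤ) else 0) - (if x = 4 then 1 else 0)
      + (if 0 < x then 1 else 0) + (if 3 < x then 1 else 0) = 1 := by decide

private lemma row2_point1 : ∀ x : Fin 5, x ≠ 0 →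
    (if x = 0 then (1 : ℤ) else 0) - (if x = 4 then 1 else 0)
      + (if 3 < x then 1 else 0) = 0 := by decide

private lemma row1_point2 : ∀ x : Fin 5,
    (if x = 1 then (1 : ℤ) else 0) - (if x = 3 then 1 else 0)
      - (if 0 < x then 1 else 0) + 2 * (if 3 ≤ x then 1 else 0)
      + (if x = 2 then 1 else 0) - (if 3 < x then 1 else 0) = 0 := by decide

private lemma row2_point2 : ∀ x : Fin 5, x ≠ 0 →
    (if x = 1 then (1 : ℤ) else 0) - (if x = 3 then 1 else 0)
      + 2 * (if 3 ≤ x then 1 else 0) + (if x = 2 then 1 else 0)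
      - (if 3 < x then 1 else 0) = 1 := by decide

end Aux

open KNTableau in
/-- The weight `wt(T) = (k1 − k_{1̄}) ε1 + (k2 − k_{2̄}) ε2` of a KN tableau `T`
of shape `(m1+m2, m2)`, written as a pair of `ε1`- and `ε2`-coordinates, equals
`(m1+m2−b2−b4, m2−b1+b2−b3+b4)`. (Letters: `0 = 1`, `1 = 2`, `3 = 2̄`, `4 = 1̄`.) -/
theorem knTableau_weight (m1 m2 : ℕ) (T : KNTableau m1 m2) :
    ((count T 0 : ℤ) - count T 4, (count T 1 : ℤ) - count T 3)
      = ((m1 + m2 : ℤ) - b2 T - b4 T,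
         (m2 : ℤ) - b1 T + b2 T - b3 T + b4 T) := by
  have hne : ∀ j, T.row2 j ≠ 0 := by
    intro j hj
    rcases T.col j with h | h
    · rw [hj] at h; exact absurd h (by simp [Fin.lt_def])
    · rw [hj] at h; exact absurd h.2 (by decide)
  -- abbreviations
  set f := T.row1 with hf
  set g := T.row2 with hg
  have H1 : ((Finset.univ.filter fun i => f i = 0).card : ℤ)
      - (Finset.univ.filter fun i => f i = 4).card
      + (Finset.univ.filter fun i => 0 < f i).card
      + (Finset.univ.filter fun i => 3 < f i).card = (m1 + m2 : ℤ) := by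
    rw [← sum_boole_int, ← sum_boole_int, ← sum_boole_int, ← sum_boole_int,
      ← Finset.sum_sub_distrib, ← Finset.sum_add_distrib, ← Finset.sum_add_distrib]
    rw [Finset.sum_congr rfl (fun i _ => row1_point1 (f i))]
    simp
  have H2 : ((Finset.univ.filter fun j => g j = 0).card : ℤ)
      - (Finset.univ.filter fun j => g j = 4).card
      + (Finset.univ.filter fun j => 3 < g j).card = 0 := by
    rw [← sum_boole_int, ← sum_boole_int, ← sum_boole_int,
      ← Finset.sum_sub_distrib, ← Finset.sum_add_distrib]
    rw [Finset.sum_congr rfl (fun j _ => row2_point1 (g j) (hne j))]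
    simp
  have H3 : ((Finset.univ.filter fun i => f i = 1).card : ℤ)
      - (Finset.univ.filter fun i => f i = 3).card
      - (Finset.univ.filter fun i => 0 < f i).card
      + 2 * (Finset.univ.filter fun i => 3 ≤ f i).card
      + (Finset.univ.filter fun i => f i = 2).card
      - (Finset.univ.filter fun i => 3 < f i).card = 0 := by
    rw [← sum_boole_int (fun i => f i = 1), ← sum_boole_int (fun i => f i = 3),
      ← sum_boole_int (fun i => 0 < f i), ← sum_boole_int (fun i => 3 ≤ f i),
      ← sum_boole_int (fun i => f i = 2), ← sum_boole_int (fun i => 3 < f i),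
      Finset.mul_sum,
      ← Finset.sum_sub_distrib, ← Finset.sum_sub_distrib, ← Finset.sum_add_distrib,
      ← Finset.sum_add_distrib, ← Finset.sum_sub_distrib]
    rw [Finset.sum_congr rfl (fun i _ => row1_point2 (f i))]
    simp
  have H4 : ((Finset.univ.filter fun j => g j = 1).card : ℤ)
      - (Finset.univ.filter fun j => g j = 3).card
      + 2 * (Finset.univ.filter fun j => 3 ≤ g j).card
      + (Finset.univ.filter fun j => g j = 2).card
      - (Finset.univ.filter fun j => 3 < g j).card = (m2 : ℤ) := by
    rw [← sum_boole_int (fun j => g j = 1), ← sum_boole_int (fun j => g j = 3),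
      ← sum_boole_int (fun j => 3 ≤ g j), ← sum_boole_int (fun j => g j = 2),
      ← sum_boole_int (fun j => 3 < g j), Finset.mul_sum,
      ← Finset.sum_sub_distrib, ← Finset.sum_add_distrib,
      ← Finset.sum_add_distrib, ← Finset.sum_sub_distrib]
    rw [Finset.sum_congr rfl (fun j _ => row2_point2 (g j) (hne j))]
    simp
  simp only [Prod.mk.injEq, count, b1, b2, b3, b4, ← hf, ← hg]
  push_cast
  constructor <;> linarith
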